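/- Let n = 2^a and let F₁, ..., F_{2a} be pairwise anticommuting invertible n×n complex matrices. Then the collection of all 2^{2a} products F₁^{λ₁} F₂^{λ₂} ⋯ F_{2a}^{λ_{2a}} with λᵢ ∈ {0,1} (including the identity) is linearly independent over ℂ, and hence forms a basis of the space of all n×n complex matrices. -/

import Mathlib

open Matrix

variable {N : Type*} [Fintype N] [DecidableEq N]

lemma aux_pair_comm (B : Matrix N N ℂ) :
    ∀ L : List (Matrix N N ℂ × ℂ), (∀ p ∈ L, p.1 * B = p.2 • (B * p.1)) →
    (L.map Prod.fst).prod * B = (L.map Prod.snd).prod • (B * (L.map Prod.fst).prod) := by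
  intro L
  induction L with
  | nil => simp
  | cons p L ih =>
    intro h
    have hp := h p List.mem_cons_self
    have hrest := ih (fun q hq => h q (List.mem_cons_of_mem _ hq))
    simp only [List.map_cons, List.prod_cons]
    rw [mul_assoc, hrest, mul_smul_comm, ← mul_assoc, hp]
    simp [smul_smul, mul_comm, mul_assoc]

lemma aux_inv_prod : ∀ (n : ℕ) (f g : Fin n → Matrix N N ℂ), (∀ i, f i * g i = 1) →
    (List.ofFn f).prod * ((List.ofFn g).reverse).prod = 1 := by
  intro n
  induction n with
  | zero => intro f g h; simp
  | succ n ih =>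
    intro f g h
    rw [List.ofFn_succ, List.ofFn_succ, List.reverse_cons, List.prod_cons, List.prod_append,
      List.prod_singleton, mul_assoc, ← mul_assoc (List.ofFn fun i => f i.succ).prod,
      ih _ _ (fun i => h i.succ), one_mul, h 0]

lemma aux_trace_zero (X B : Matrix N N ℂ) (hB : IsUnit B.det) (h : X * B = -(B * X)) :
    Matrix.trace X = 0 := by
  have h1 : B * B⁻¹ = 1 := mul_nonsing_inv B hB
  have h2 : B⁻¹ * B = 1 := nonsing_inv_mul B hB
  have key : Matrix.trace X = -Matrix.trace X := by
    calc Matrix.trace X = Matrix.trace (X * (B * B⁻¹)) := by rw [h1, mul_one]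
      _ = Matrix.trace ((X * B) * B⁻¹) := by rw [mul_assoc]
      _ = Matrix.trace (-(B * X) * B⁻¹) := by rw [h]
      _ = -Matrix.trace ((B * X) * B⁻¹) := by rw [neg_mul, trace_neg]
      _ = -Matrix.trace (B⁻¹ * (B * X)) := by rw [trace_mul_comm]
      _ = -Matrix.trace ((B⁻¹ * B) * X) := by rw [mul_assoc]
      _ = -Matrix.trace X := by rw [h2, one_mul]
  exact add_self_eq_zero.mp (by linear_combination key)

theorem anticommuting_products_linearly_independent {a : ℕ}
    (F : Fin (2 * a) → Matrix (Fin (2 ^ a)) (Fin (2 ^ a)) ℂ)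
    (hInv : ∀ i, IsUnit (F i))
    (hAC : ∀ i j, i ≠ j → F i * F j = -(F j * F i)) :
    LinearIndependent ℂ
      (fun lam : Fin (2 * a) → Bool =>
        (List.ofFn (fun i => if lam i then F i else 1)).prod) ∧
    Submodule.span ℂ
      (Set.range (fun lam : Fin (2 * a) → Bool =>
        (List.ofFn (fun i => if lam i then F i else 1)).prod)) = ⊤ := by
  have hdet : ∀ i, IsUnit (F i).det := fun i => (isUnit_iff_isUnit_det _).mp (hInv i)
  have hFinv : ∀ i, F i * (F i)⁻¹ = 1 := fun i => mul_nonsing_inv _ (hdet i)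
  have hinvF : ∀ i, (F i)⁻¹ * F i = 1 := fun i => nonsing_inv_mul _ (hdet i)
  have hACinv : ∀ i j, i ≠ j → (F i)⁻¹ * F j = -(F j * (F i)⁻¹) := by
    intro i j hij
    have h1 : F j * F i = -(F i * F j) := hAC j i (Ne.symm hij)
    calc (F i)⁻¹ * F j = (F i)⁻¹ * F j * (F i * (F i)⁻¹) := by rw [hFinv, mul_one]
      _ = (F i)⁻¹ * (F j * F i) * (F i)⁻¹ := by simp only [mul_assoc]
      _ = (F i)⁻¹ * (-(F i * F j)) * (F i)⁻¹ := by rw [h1]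
      _ = -(((F i)⁻¹ * F i) * (F j * (F i)⁻¹)) := by simp only [mul_neg, neg_mul, mul_assoc]
      _ = -(F j * (F i)⁻¹) := by rw [hinvF, one_mul]
  set P : (Fin (2 * a) → Bool) → Matrix (Fin (2 ^ a)) (Fin (2 ^ a)) ℂ :=
    fun lam => (List.ofFn (fun i => if lam i then F i else 1)).prod with hP
  set Q : (Fin (2 * a) → Bool) → Matrix (Fin (2 ^ a)) (Fin (2 ^ a)) ℂ :=
    fun mu => ((List.ofFn (fun i => if mu i then (F i)⁻¹ else 1)).reverse).prod with hQ
  -- commutation of P lam with F j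
  have hPcomm : ∀ (lam : Fin (2 * a) → Bool) (j : Fin (2 * a)),
      P lam * F j = (∏ i, if lam i = true ∧ i ≠ j then (-1 : ℂ) else 1) • (F j * P lam) := by
    intro lam j
    have := aux_pair_comm (F j)
      (List.ofFn (fun i => (if lam i then F i else 1, if lam i = true ∧ i ≠ j then (-1 : ℂ) else 1)))
      (by
        intro p hp
        rw [List.mem_ofFn] at hp
        obtain ⟨i, rfl⟩ := hp
        by_cases hl : lam i = true
        · by_cases hij : i = j
          · subst hij; simp [hl]
          · simp only [hl, if_true, hij, Ne, not_false_iff, and_true, if_true]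
            rw [hAC i j hij, neg_one_smul]
        · simp [hl])
    simpa [List.map_ofFn, Function.comp_def, List.prod_ofFn, hP] using this
  have hQcomm : ∀ (mu : Fin (2 * a) → Bool) (j : Fin (2 * a)),
      Q mu * F j = (∏ i, if mu i = true ∧ i ≠ j then (-1 : ℂ) else 1) • (F j * Q mu) := by
    intro mu j
    have := aux_pair_comm (F j)
      ((List.ofFn (fun i => (if mu i then (F i)⁻¹ else 1, if mu i = true ∧ i ≠ j then (-1 : ℂ) else 1))).reverse)
      (by
        intro p hp
        rw [List.mem_reverse, List.mem_ofFn] at hp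
        obtain ⟨i, rfl⟩ := hp
        by_cases hl : mu i = true
        · by_cases hij : i = j
          · subst hij; simp [hl, hinvF i, hFinv i]
          · simp only [hl, if_true, hij, Ne, not_false_iff, and_true, if_true]
            rw [hACinv i j hij, neg_one_smul]
        · simp [hl])
    simpa [List.map_reverse, List.map_ofFn, Function.comp_def, List.prod_ofFn, List.prod_reverse, hQ] using this
  -- trace of P mu * Q mu
  have hPQ : ∀ mu, P mu * Q mu = 1 := by
    intro mu
    apply aux_inv_prod
    intro i
    by_cases hl : mu i = true
    · simp only [hl, if_true]; exact hFinv i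
    · simp [hl]
  -- trace of P lam * Q mu for lam ≠ mu
  have htr0 : ∀ lam mu, lam ≠ mu → Matrix.trace (P lam * Q mu) = 0 := by
    intro lam mu hne
    set D : Finset (Fin (2 * a)) := Finset.univ.filter (fun i => lam i ≠ mu i) with hD
    have hDne : D.Nonempty := by
      by_contra hcon
      rw [Finset.not_nonempty_iff_eq_empty] at hcon
      apply hne
      funext i
      by_contra hmem
      have : i ∈ D := by simp [hD, hmem]
      simp [hcon] at this
    -- choose j making the relevant count odd
    have hexists : ∃ j, Odd ((D.erase j).card) := by
      rcases Nat.even_or_odd D.card with heven | hodd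
      · obtain ⟨j, hj⟩ := hDne
        exact ⟨j, by
          rw [Finset.card_erase_of_mem hj]
          exact Nat.Even.sub_odd (Nat.one_le_iff_ne_zero.mpr (Finset.card_ne_zero_of_mem hj))
            heven odd_one⟩
      · have hDne' : D ≠ Finset.univ := by
          intro hcon
          rw [hcon, Finset.card_univ, Fintype.card_fin] at hodd
          exact (Nat.not_odd_iff_even.mpr (even_two_mul a)) hodd
        obtain ⟨j, hj⟩ : ∃ j, j ∉ D := by
          by_contra hcon
          push_neg at hcon
          exact hDne' (Finset.eq_univ_iff_forall.mpr hcon)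
        exact ⟨j, by rw [Finset.erase_eq_of_notMem hj]; exact hodd⟩
    obtain ⟨j, hj⟩ := hexists
    -- the combined sign is -1
    have hsign : ((∏ i, if mu i = true ∧ i ≠ j then (-1 : ℂ) else 1) *
        (∏ i, if lam i = true ∧ i ≠ j then (-1 : ℂ) else 1)) = -1 := by
      rw [← Finset.prod_mul_distrib]
      have heq : ∀ i : Fin (2 * a),
          ((if mu i = true ∧ i ≠ j then (-1 : ℂ) else 1) *
            (if lam i = true ∧ i ≠ j then (-1 : ℂ) else 1)) =
          (if (lam i ≠ mu i) ∧ i ≠ j then (-1 : ℂ) else 1) := by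
        intro i
        by_cases hij : i = j
        · simp [hij]
        · cases hli : lam i <;> cases hmi : mu i <;> simp [hij, hli, hmi]
      rw [Finset.prod_congr rfl (fun i _ => heq i)]
      rw [Finset.prod_ite, Finset.prod_const, Finset.prod_const, one_pow, mul_one]
      have hfe : Finset.univ.filter (fun i => (lam i ≠ mu i) ∧ i ≠ j) = D.erase j := by
        ext i
        simp [hD, Finset.mem_erase, and_comm]
      rw [hfe]
      exact Odd.neg_one_pow hj
    -- anticommutation of X with F j
    have hX : (P lam * Q mu) * F j = -(F j * (P lam * Q mu)) := by
      rw [mul_assoc, hQcomm mu j, mul_smul_comm, ← mul_assoc, hPcomm lam j, smul_mul_assoc,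
        smul_smul, hsign]
      rw [neg_one_smul]
      simp only [mul_assoc]
    exact aux_trace_zero _ (F j) (hdet j) hX
  have hli : LinearIndependent ℂ P := by
    rw [Fintype.linearIndependent_iff]
    intro c hc mu
    have h0 : (∑ lam, c lam • P lam) * Q mu = 0 := by rw [hc, zero_mul]
    rw [Finset.sum_mul] at h0
    simp_rw [smul_mul_assoc] at h0
    have ht := congrArg Matrix.trace h0
    rw [trace_sum] at ht
    simp_rw [trace_smul] at ht
    rw [Finset.sum_eq_single mu (fun lam _ hlne => by rw [htr0 lam mu hlne, smul_zero])
      (fun h => absurd (Finset.mem_univ mu) h)] at ht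
    rw [hPQ mu, trace_one, trace_zero] at ht
    have hcard : (Fintype.card (Fin (2 ^ a)) : ℂ) ≠ 0 := by
      simp only [Fintype.card_fin]
      exact Nat.cast_ne_zero.mpr (pow_ne_zero _ two_ne_zero)
    simpa [smul_eq_mul, hcard] using ht
  refine ⟨hli, ?_⟩
  apply hli.span_eq_top_of_card_eq_finrank
  rw [Module.finrank_matrix]
  simp [Fintype.card_fun, Fintype.card_fin, ← pow_add, two_mul]
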